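/- Let G be a finite simple graph on n vertices, let A and Z be disjoint sets of vertices and Q = V(G) \ (A ∪ Z). Let d ≥ 1, λ > 0, κ > 2λ and c > 0 be reals. Suppose that (i) |E(G[Q])| < λ·d·|Q|, (ii) every vertex v ∈ Q whose degree in G[Q] is strictly less than κ·d has strictly more than d neighbors in A, and (iii) the number of vertices of Q with strictly more than d neighbors in A is strictly less than c·d·|A|. Then |A ∪ Z| > n / (c·d·κ/(κ − 2λ) + 1). -/

import Mathlib

/-- If none of the three rules of the algorithm is applicable, then the set `A ∪ Z` of
already-decided vertices constitutes a constant fraction of the whole vertex set. -/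
theorem decided_fraction_large {V : Type*} [Fintype V] (G : SimpleGraph V)
    (A Z : Set V) (hAZ : Disjoint A Z) (Q : Set V) (hQ : Q = (A ∪ Z)ᶜ)
    (d lam kap c : ℝ) (hd : 1 ≤ d) (hlam : 0 < lam) (hkap : 2 * lam < kap) (hc : 0 < c)
    (hE : (((G.induce Q).edgeSet.ncard : ℝ)) < lam * d * Q.ncard)
    (hlow : ∀ v ∈ Q, ((Q ∩ G.neighborSet v).ncard : ℝ) < kap * d →
      d < ((A ∩ G.neighborSet v).ncard : ℝ))
    (hfew : ({v ∈ Q | d < ((A ∩ G.neighborSet v).ncard : ℝ)}.ncard : ℝ) < c * d * A.ncard) :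
    (Fintype.card V : ℝ) / (c * d * kap / (kap - 2 * lam) + 1) < ((A ∪ Z).ncard : ℝ) := by
  classical
  -- degrees in the induced graph
  have hdeg : ∀ x : Q, (Q ∩ G.neighborSet (x : V)).ncard = (G.induce Q).degree x := by
    intro x
    have e : ↥((G.induce Q).neighborSet x) ≃ ↥(Q ∩ G.neighborSet (x : V)) :=
      Equiv.subtypeSubtypeEquivSubtypeInter (· ∈ Q) (fun w => G.Adj (x : V) w)
    rw [← SimpleGraph.card_neighborSet_eq_degree, ← Nat.card_eq_fintype_card,
      ← Nat.card_coe_set_eq]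
    exact Nat.card_congr e.symm
  -- degree-sum formula
  have hsum : ∑ v ∈ Q.toFinset, (Q ∩ G.neighborSet v).ncard
      = 2 * (G.induce Q).edgeSet.ncard := by
    rw [← Finset.sum_set_coe]
    calc ∑ x : Q, (Q ∩ G.neighborSet (x : V)).ncard
        = ∑ x : Q, (G.induce Q).degree x := Finset.sum_congr rfl fun x _ => hdeg x
      _ = 2 * (G.induce Q).edgeFinset.card := (G.induce Q).sum_degrees_eq_twice_card_edges
      _ = 2 * (G.induce Q).edgeSet.ncard := by rw [Set.ncard_eq_toFinset_card']; congr 2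
  set Qf := Q.toFinset with hQf
  set Lf := Qf.filter (fun v => ((Q ∩ G.neighborSet v).ncard : ℝ) < kap * d) with hLf
  set Hf := Qf.filter (fun v => ¬ ((Q ∩ G.neighborSet v).ncard : ℝ) < kap * d) with hHf
  have hsplit : Lf.card + Hf.card = Qf.card := Finset.card_filter_add_card_filter_not _
  -- H bound
  have hHsum : (kap * d) * Hf.card ≤ ∑ v ∈ Hf, ((Q ∩ G.neighborSet v).ncard : ℝ) := by
    have := Finset.card_nsmul_le_sum Hf (fun v => ((Q ∩ G.neighborSet v).ncard : ℝ)) (kap * d)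
      (fun v hv => not_lt.mp (Finset.mem_filter.mp hv).2)
    simpa [nsmul_eq_mul, mul_comm] using this
  have hHQ : ∑ v ∈ Hf, ((Q ∩ G.neighborSet v).ncard : ℝ)
      ≤ ∑ v ∈ Qf, ((Q ∩ G.neighborSet v).ncard : ℝ) :=
    Finset.sum_le_sum_of_subset_of_nonneg (Finset.filter_subset _ _)
      (fun _ _ _ => by positivity)
  have hsumR : ∑ v ∈ Qf, ((Q ∩ G.neighborSet v).ncard : ℝ)
      = 2 * ((G.induce Q).edgeSet.ncard : ℝ) := by
    rw [← Nat.cast_sum]; exact_mod_cast congrArg (Nat.cast : ℕ → ℝ) hsum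
  have hH : (kap * d) * Hf.card < 2 * (lam * d * Q.ncard) := by
    calc (kap * d) * Hf.card ≤ ∑ v ∈ Qf, ((Q ∩ G.neighborSet v).ncard : ℝ) :=
          le_trans hHsum hHQ
      _ = 2 * ((G.induce Q).edgeSet.ncard : ℝ) := hsumR
      _ < 2 * (lam * d * Q.ncard) := by linarith
  -- L bound
  have hLsub : Lf ⊆ {v ∈ Q | d < ((A ∩ G.neighborSet v).ncard : ℝ)}.toFinset := by
    intro v hv
    rw [Set.mem_toFinset]
    obtain ⟨hvQ, hvd⟩ := Finset.mem_filter.mp hv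
    rw [hQf, Set.mem_toFinset] at hvQ
    exact ⟨hvQ, hlow v hvQ hvd⟩
  have hL : (Lf.card : ℝ) < c * d * A.ncard := by
    have := Finset.card_le_card hLsub
    rw [← Set.ncard_eq_toFinset_card'] at this
    calc (Lf.card : ℝ) ≤ _ := Nat.cast_le.mpr this
      _ < c * d * A.ncard := hfew
  -- counts
  have hAs : (A.ncard : ℝ) ≤ ((A ∪ Z).ncard : ℝ) :=
    Nat.cast_le.mpr (Set.ncard_le_ncard Set.subset_union_left (Set.toFinite _))
  have hn : (Fintype.card V : ℝ) = Q.ncard + ((A ∪ Z).ncard : ℝ) := by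
    have : (A ∪ Z).ncard + Q.ncard = Fintype.card V := by
      rw [hQ, ← Nat.card_eq_fintype_card]
      exact Set.ncard_add_ncard_compl _
    push_cast [← this]; ring
  have hQcard : (Q.ncard : ℝ) = Lf.card + Hf.card := by
    rw [show Q.ncard = Qf.card from Set.ncard_eq_toFinset_card' Q, ← hsplit]
    push_cast; ring
  -- algebra
  set s := ((A ∪ Z).ncard : ℝ)
  set q := (Q.ncard : ℝ)
  have hd0 : (0:ℝ) < d := lt_of_lt_of_le one_pos hd
  have hk2 : (0:ℝ) < kap - 2 * lam := by linarith
  have hkap0 : (0:ℝ) < kap := by linarith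
  have key : q * (kap - 2 * lam) < s * (c * d * kap) := by
    have h1 : kap * (Hf.card : ℝ) < 2 * lam * q := by nlinarith
    have h2 : (Lf.card : ℝ) < c * d * s := by
      have := mul_le_mul_of_nonneg_left hAs (show (0:ℝ) ≤ c * d by positivity)
      nlinarith
    nlinarith
  have hD : (0:ℝ) < c * d * kap / (kap - 2 * lam) + 1 := by positivity
  rw [div_lt_iff₀ hD, hn]
  have hq : q < s * (c * d * kap) / (kap - 2 * lam) := (lt_div_iff₀ hk2).mpr key
  have : s * (c * d * kap / (kap - 2 * lam) + 1) = s * (c * d * kap) / (kap - 2 * lam) + s := by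
    field_simp
  rw [this]; linarith
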